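/- For every unit vector φ ∈ ℂ^G and every (g,h) ∈ G × G, Σ_{k ∈ G} |⟪(((D_h·P_g) ⊗ id)Φ) ⊗ e_k, φ ⊗ Φ⟫|² = 1/d². (In the braid-free qudit teleportation protocol, Alice's measurement outcomes (g,h) are uniformly distributed: each of the d² outcomes occurs with probability 1/d².) -/

import Mathlib

noncomputable section
open Matrix
open scoped InnerProductSpace

/-- The group `G = (ZMod 2)ⁿ`. -/
abbrev G (n : ℕ) : Type := Fin n → ZMod 2

/-- The standard symmetric bicharacter `χ(g,h) = (-1)^{g·h}` of `(ZMod 2)ⁿ`. -/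
def chi {n : ℕ} (g h : G n) : ℂ := (-1) ^ (∑ i, g i * h i).val

/-- The standard basis vector `e_k` of `ℂ^G`. -/
def eb {n : ℕ} (k : G n) : G n → ℂ := Pi.single k 1

/-- The shift operator `P_g : e_k ↦ e_{k+g}` on `ℂ^G`, as a matrix. -/
def Pmat {n : ℕ} (g : G n) : Matrix (G n) (G n) ℂ :=
  fun a b => if a = b + g then 1 else 0

/-- The phase operator `D_h : e_k ↦ χ(h,k)·e_k` on `ℂ^G`, as a matrix. -/
def Dmat {n : ℕ} (h : G n) : Matrix (G n) (G n) ℂ :=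
  Matrix.diagonal (fun k => chi h k)

/-- Tensor product of two vectors of `ℂ^G`, as a vector of `ℂ^G ⊗ ℂ^G`. -/
def tensGG {n : ℕ} (v w : G n → ℂ) : G n × G n → ℂ := fun p => v p.1 * w p.2

/-- The e-dit (maximally entangled 2-qudit state)
`Φ = d^{-1/2} Σ_{k∈G} e_k ⊗ e_k`, `d = 2ⁿ`. -/
def Phi (n : ℕ) : G n × G n → ℂ :=
  ((Real.sqrt (2 ^ n) : ℂ))⁻¹ • ∑ k : G n, tensGG (eb k) (eb k)

/-- The action of `A ⊗ id` on `ℂ^G ⊗ ℂ^G`. -/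
def actL {n : ℕ} (A : Matrix (G n) (G n) ℂ) (w : G n × G n → ℂ) : G n × G n → ℂ :=
  fun p => ∑ k, A p.1 k * w (k, p.2)

/-- Tensor product of a qudit vector (first factor) with a 2-qudit vector
(second and third factors), as a vector of `ℂ^G ⊗ ℂ^G ⊗ ℂ^G`. -/
def tensG_GG {n : ℕ} (v : G n → ℂ) (w : G n × G n → ℂ) : G n × G n × G n → ℂ :=
  fun p => v p.1 * w p.2

/-- Tensor product of a 2-qudit vector (first and second factors) with a qudit
vector (third factor), as a vector of `ℂ^G ⊗ ℂ^G ⊗ ℂ^G`. -/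
def tensGG_G {n : ℕ} (w : G n × G n → ℂ) (v : G n → ℂ) : G n × G n × G n → ℂ :=
  fun p => w (p.1, p.2.1) * v p.2.2

/-- `ℂ^G` equipped with its Hermitian inner product. -/
def toE1 {n : ℕ} (f : G n → ℂ) : EuclideanSpace ℂ (G n) :=
  (WithLp.equiv 2 (G n → ℂ)).symm f

/-- `ℂ^G ⊗ ℂ^G ⊗ ℂ^G` equipped with its Hermitian inner product. -/
def toE3 {n : ℕ} (f : G n × G n × G n → ℂ) : EuclideanSpace ℂ (G n × G n × G n) :=
  (WithLp.equiv 2 (G n × G n × G n → ℂ)).symm f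

lemma Phi_apply {n : ℕ} (p : G n × G n) :
    Phi n p = ((Real.sqrt (2 ^ n) : ℂ))⁻¹ * (if p.1 = p.2 then 1 else 0) := by
  simp [Phi, tensGG, eb, Pi.single_apply, Finset.sum_ite_eq, ite_and, eq_comm]

lemma DP_apply {n : ℕ} (g h : G n) (a b : G n) :
    (Dmat h * Pmat g) a b = if a = b + g then chi h a else 0 := by
  rw [Dmat, Matrix.diagonal_mul, Pmat]
  simp [mul_ite]

lemma actL_formula {n : ℕ} (g h : G n) (p : G n × G n) :
    actL (Dmat h * Pmat g) (Phi n) p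
      = ((Real.sqrt (2 ^ n) : ℂ))⁻¹ * (if p.1 = p.2 + g then chi h p.1 else 0) := by
  simp only [actL, DP_apply, Phi_apply]
  rw [Finset.sum_eq_single p.2]
  · rw [if_pos rfl]; split_ifs <;> ring
  · intro b _ hb; simp [hb]
  · simp

lemma chi_abs {n : ℕ} (g h : G n) : ‖chi g h‖ = 1 := by
  simp [chi]

lemma inner_formula {n : ℕ} (g h k : G n) (φ : G n → ℂ) :
    ⟪toE3 (tensGG_G (actL (Dmat h * Pmat g) (Phi n)) (eb k)),
      toE3 (tensG_GG φ (Phi n))⟫_ℂ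
    = ((Real.sqrt (2 ^ n) : ℂ))⁻¹ * ((Real.sqrt (2 ^ n) : ℂ))⁻¹
        * (starRingEnd ℂ) (chi h (k + g)) * φ (k + g) := by
  simp only [toE3, PiLp.inner_apply, WithLp.equiv_symm_apply, PiLp.toLp_apply, RCLike.inner_apply]
  simp only [tensGG_G, tensG_GG, actL_formula, Phi_apply, eb, Pi.single_apply]
  rw [Fintype.sum_eq_single ((k + g, k, k) : G n × G n × G n)]
  · simp only [if_pos rfl, if_true, _root_.map_one, mul_one, _root_.map_mul, Complex.conj_inv,
      Complex.conj_ofReal]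
    ring
  · intro p hp
    by_cases h1 : p.1 = p.2.1 + g
    · by_cases h3 : p.2.1 = p.2.2
      · by_cases h2 : p.2.2 = k
        · exfalso; apply hp
          have : p.2.1 = k := h3.trans h2
          exact Prod.ext (by rw [h1, this]) (Prod.ext this h2)
        · simp [h2]
      · simp [h3]
    · simp [h1]

/-- In the braid-free qudit teleportation protocol, Alice's measurement
outcomes are uniformly distributed: for every unit vector `φ ∈ ℂ^G` and every
`(g,h) ∈ G × G`,
`Σ_{k ∈ G} |⟪(((D_h·P_g) ⊗ id)Φ) ⊗ e_k, φ ⊗ Φ⟫|² = 1/d²`. -/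
theorem teleportation_outcomes_uniform (n : ℕ) (hn : 1 ≤ n) (φ : G n → ℂ)
    (hφ : ‖toE1 φ‖ = 1) (g h : G n) :
    ∑ k : G n,
        ‖⟪toE3 (tensGG_G (actL (Dmat h * Pmat g) (Phi n)) (eb k)),
              toE3 (tensG_GG φ (Phi n))⟫_ℂ‖ ^ 2 =
      1 / ((2 : ℝ) ^ n) ^ 2 := by
  have hd : (0:ℝ) ≤ 2 ^ n := by positivity
  have hinv : ‖((Real.sqrt (2 ^ n) : ℂ))⁻¹‖ = (Real.sqrt (2 ^ n))⁻¹ := by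
    rw [norm_inv, Complex.norm_real, Real.norm_eq_abs, abs_of_nonneg (Real.sqrt_nonneg _)]
  have habs : ∀ k : G n,
      ‖⟪toE3 (tensGG_G (actL (Dmat h * Pmat g) (Phi n)) (eb k)),
        toE3 (tensG_GG φ (Phi n))⟫_ℂ‖ = ((2:ℝ)^n)⁻¹ * ‖φ (k+g)‖ := by
    intro k
    rw [inner_formula, norm_mul, norm_mul, norm_mul, Complex.norm_conj, chi_abs, hinv, mul_one,
      ← mul_inv, Real.mul_self_sqrt hd]
  simp only [habs, mul_pow]
  rw [← Finset.mul_sum]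
  have hsum : ∑ k : G n, ‖φ (k + g)‖ ^ 2 = ∑ k : G n, ‖φ k‖ ^ 2 :=
    Fintype.sum_equiv (Equiv.addRight g) _ _ (fun x => rfl)
  have hnorm : ∑ k : G n, ‖φ k‖ ^ 2 = 1 := by
    have := hφ
    rw [EuclideanSpace.norm_eq] at this
    have h2 : ∑ k : G n, ‖toE1 φ k‖ ^ 2 = 1 := by
      have hs : (0:ℝ) ≤ ∑ k : G n, ‖toE1 φ k‖ ^ 2 :=
        Finset.sum_nonneg (fun i _ => by positivity)
      rw [← Real.sq_sqrt hs, this]; norm_num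
    simpa [toE1] using h2
  rw [hsum, hnorm, mul_one, inv_pow, one_div]
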